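/- arXiv:1407.5841 — 2 statements merged into one kernel-verified Lean document; each statement's English description precedes it below -/
import Mathlib

section
/- For every n ≥ 2 there exists a square of order T_n in the infinite Tribonacci word T, and also a square of order T_n + T_{n-1}. -/
/-- The Tribonacci morphism: 0 → 01, 1 → 02, 2 → 0. -/
def tribMap (c : ℕ) : List ℕ := if c = 0 then [0,1] else if c = 1 then [0,2] else [0]

/-- Iterates of the Tribonacci morphism on the word `0`. -/
def tribIter : ℕ → List ℕ
  | 0 => [0]
  | k+1 => (tribIter k).flatMap tribMap

/-- The infinite Tribonacci word, the fixed point starting with 0 of 0→01, 1→02, 2→0. -/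
def tribWord (n : ℕ) : ℕ := (tribIter (n+1)).getD n 0

/-- The Tribonacci numbers. -/
def trib : ℕ → ℕ
  | 0 => 0
  | 1 => 1
  | 2 => 1
  | n+3 => trib (n+2) + trib (n+1) + trib n

lemma trib_pos : ∀ k, 1 ≤ trib (k+1)
  | 0 => le_refl _
  | 1 => le_refl _
  | k+2 => by
      show 1 ≤ trib (k+2) + trib (k+1) + trib k
      have := trib_pos k
      omega

lemma trib_lb : ∀ k, k + 1 ≤ trib (k+3)
  | 0 => by decide
  | k+1 => by
      show k + 2 ≤ trib (k+3) + trib (k+2) + trib (k+1)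
      have h1 := trib_lb k
      have h2 := trib_pos k
      omega

lemma tribIter_add3 : ∀ k, tribIter (k+3) = tribIter (k+2) ++ tribIter (k+1) ++ tribIter k
  | 0 => by decide
  | k+1 => by
      conv_lhs => rw [show tribIter (k+1+3) = (tribIter (k+3)).flatMap tribMap from rfl,
        tribIter_add3 k, List.flatMap_append, List.flatMap_append]
      rfl

lemma tribIter_length : ∀ k, (tribIter k).length = trib (k+2)
  | 0 => rfl
  | 1 => rfl
  | 2 => rfl
  | k+3 => by
      rw [tribIter_add3, List.length_append, List.length_append,
        tribIter_length (k+2), tribIter_length (k+1), tribIter_length k]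
      show _ = trib (k+2+3)
      show _ = trib (k+2+2) + trib (k+2+1) + trib (k+2)
      ring

lemma flatMap_prefix {l₁ l₂ : List ℕ} (h : l₁ <+: l₂) :
    l₁.flatMap tribMap <+: l₂.flatMap tribMap := by
  obtain ⟨t, rfl⟩ := h
  exact ⟨t.flatMap tribMap, List.flatMap_append.symm⟩

lemma tribIter_prefix_succ (k : ℕ) : tribIter k <+: tribIter (k+1) := by
  induction k with
  | zero => exact ⟨[1], rfl⟩
  | succ k ih => exact flatMap_prefix ih

lemma tribIter_prefix {k m : ℕ} (h : k ≤ m) : tribIter k <+: tribIter m := by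
  induction m with
  | zero => simp [Nat.le_zero.mp h]
  | succ m ih =>
      rcases Nat.lt_or_ge k (m+1) with h' | h'
      · exact (ih (Nat.lt_succ_iff.mp h')).trans (tribIter_prefix_succ m)
      · have : k = m + 1 := le_antisymm h h'
        subst this; exact List.prefix_rfl

lemma getD_of_prefix {l₁ l₂ : List ℕ} (h : l₁ <+: l₂) {j : ℕ} (hj : j < l₁.length) :
    l₁.getD j 0 = l₂.getD j 0 := by
  rw [List.getD_eq_getElem _ _ hj,
    List.getD_eq_getElem _ _ (lt_of_lt_of_le hj h.length_le), h.getElem hj]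

lemma tribWord_eq (m j : ℕ) (h : j < (tribIter m).length) :
    tribWord j = (tribIter m).getD j 0 := by
  unfold tribWord
  rcases Nat.le_total m (j+1) with hm | hm
  · exact (getD_of_prefix (tribIter_prefix hm) h).symm
  · refine getD_of_prefix (tribIter_prefix hm) ?_
    rw [tribIter_length]
    exact trib_lb j

lemma square_of_decomp {m : ℕ} {u w v : List ℕ} (h : tribIter m = u ++ w ++ w ++ v) :
    ∀ t < w.length, tribWord (u.length + t) = tribWord (u.length + w.length + t) := by
  intro t ht
  have hlen : (tribIter m).length = u.length + w.length + w.length + v.length := by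
    rw [h]; simp only [List.length_append]
  have h1 : u.length + t < (tribIter m).length := by omega
  have h2 : u.length + w.length + t < (tribIter m).length := by omega
  rw [tribWord_eq m _ h1, tribWord_eq m _ h2, h]
  have hre : u ++ w ++ w ++ v = u ++ (w ++ (w ++ v)) := by simp [List.append_assoc]
  rw [hre]
  have A1 : (u ++ (w ++ (w ++ v))).getD (u.length + t) 0 = w.getD t 0 := by
    rw [List.getD_append_right u _ 0 (u.length + t) (by omega)]
    have e1 : u.length + t - u.length = t := by omega
    rw [e1, List.getD_append _ _ _ t ht]
  have A2 : (u ++ (w ++ (w ++ v))).getD (u.length + w.length + t) 0 = w.getD t 0 := by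
    rw [List.getD_append_right u _ 0 (u.length + w.length + t) (by omega)]
    have e2 : u.length + w.length + t - u.length = w.length + t := by omega
    rw [e2, List.getD_append_right w _ 0 (w.length + t) (by omega)]
    have e3 : w.length + t - w.length = t := by omega
    rw [e3, List.getD_append _ _ _ t ht]
  rw [A1, A2]

/-- Square `A_{j+2} A_{j+2}` inside `A_{j+6}` after prefix `A_{j+4} ++ A_{j+3}`. -/
lemma squareS1 (j : ℕ) :
    ∃ v, tribIter (j+6) = (tribIter (j+4) ++ tribIter (j+3)) ++ tribIter (j+2)
      ++ tribIter (j+2) ++ v := by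
  refine ⟨tribIter (j+1) ++ tribIter j ++ tribIter (j+2) ++ tribIter (j+1)
    ++ tribIter (j+3), ?_⟩
  have e6 : tribIter (j+6) = tribIter (j+5) ++ tribIter (j+4) ++ tribIter (j+3) :=
    tribIter_add3 (j+3)
  have e5 : tribIter (j+5) = tribIter (j+4) ++ tribIter (j+3) ++ tribIter (j+2) :=
    tribIter_add3 (j+2)
  have e4 : tribIter (j+4) = tribIter (j+3) ++ tribIter (j+2) ++ tribIter (j+1) :=
    tribIter_add3 (j+1)
  have e3 : tribIter (j+3) = tribIter (j+2) ++ tribIter (j+1) ++ tribIter j :=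
    tribIter_add3 j
  simp only [e6, e5, e4, e3, List.append_assoc]

/-- Square `(A_{j+3} A_{j+2})²` inside `A_{j+6}` after prefix `A_{j+4}`. -/
lemma squareS2 (j : ℕ) :
    ∃ v, tribIter (j+6) = tribIter (j+4) ++ (tribIter (j+3) ++ tribIter (j+2))
      ++ (tribIter (j+3) ++ tribIter (j+2)) ++ v := by
  refine ⟨tribIter (j+1) ++ tribIter (j+3), ?_⟩
  have e6 : tribIter (j+6) = tribIter (j+5) ++ tribIter (j+4) ++ tribIter (j+3) :=
    tribIter_add3 (j+3)
  have e5 : tribIter (j+5) = tribIter (j+4) ++ tribIter (j+3) ++ tribIter (j+2) :=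
    tribIter_add3 (j+2)
  have e4 : tribIter (j+4) = tribIter (j+3) ++ tribIter (j+2) ++ tribIter (j+1) :=
    tribIter_add3 (j+1)
  have e3 : tribIter (j+3) = tribIter (j+2) ++ tribIter (j+1) ++ tribIter j :=
    tribIter_add3 j
  simp only [e6, e5, e4, e3, List.append_assoc]

lemma square_exists_of_decomp {m : ℕ} {u w v : List ℕ} (h : tribIter m = u ++ w ++ w ++ v)
    {p : ℕ} (hp : w.length = p) :
    ∃ i, ∀ t < p, tribWord (i + t) = tribWord (i + p + t) := by
  subst hp
  exact ⟨u.length, square_of_decomp h⟩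

/-- For every `n ≥ 2` the Tribonacci word contains squares of order `T_n` and of
order `T_n + T_{n-1}`. -/
theorem tribWord_squares_exist (n : ℕ) (hn : 2 ≤ n) :
    (∃ i, ∀ t < trib n, tribWord (i + t) = tribWord (i + trib n + t)) ∧
    (∃ i, ∀ t < trib n + trib (n - 1),
        tribWord (i + t) = tribWord (i + (trib n + trib (n - 1)) + t)) := by
  match n, hn with
  | 2, _ =>
    constructor
    · exact square_exists_of_decomp
        (u := [0,1,0,2,0,1]) (w := [0])
        (v := [1,0,2,0,1,0,1,0,2,0,1,0,0,1,0,2,0,1,0,2,0,1,0,0,1,0,2,0,1,0,1,0,2,0,1,0])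
        (m := 6) (by decide) (by decide)
    · exact square_exists_of_decomp
        (u := [0,1,0,2,0,1,0,0,1,0,2]) (w := [0,1])
        (v := [0,2,0,1,0,0,1,0,2,0,1,0,2,0,1,0,0,1,0,2,0,1,0,1,0,2,0,1,0])
        (m := 6) (by decide) (by decide)
  | 3, _ =>
    constructor
    · exact square_exists_of_decomp
        (u := [0,1,0,2,0,1,0,0,1,0,2]) (w := [0,1])
        (v := [0,2,0,1,0,0,1,0,2,0,1,0,2,0,1,0,0,1,0,2,0,1,0,1,0,2,0,1,0])
        (m := 6) (by decide) (by decide)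
    · exact square_exists_of_decomp
        (u := [0,1,0,2]) (w := [0,1,0])
        (v := [2,0,1,0,1,0,2,0,1,0,0,1,0,2,0,1,0,2,0,1,0,0,1,0,2,0,1,0,1,0,2,0,1,0])
        (m := 6) (by decide) (by decide)
  | 4, _ =>
    constructor
    · exact square_exists_of_decomp
        (u := [0,1,0,2,0,1,0,0,1,0,2,0,1,0,1,0,2,0,1,0]) (w := [0,1,0,2])
        (v := [0,1,0,0,1,0,2,0,1,0,1,0,2,0,1,0])
        (m := 6) (by decide) (by decide)
    · exact square_exists_of_decomp
        (u := [0,1,0,2,0,1,0]) (w := [0,1,0,2,0,1])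
        (v := [0,0,1,0,2,0,1,0,2,0,1,0,0,1,0,2,0,1,0,1,0,2,0,1,0])
        (m := 6) (by decide) (by decide)
  | (j+5), _ =>
    constructor
    · obtain ⟨v, hv⟩ := squareS1 (j+1)
      refine square_exists_of_decomp hv ?_
      rw [tribIter_length]
    · obtain ⟨v, hv⟩ := squareS2 j
      refine square_exists_of_decomp hv ?_
      rw [List.length_append, tribIter_length, tribIter_length]
      rfl
end

section
/- The lengths of the palindromic prefixes of the infinite Tribonacci word are exactly 0 together with the integers (T_i + T_{i+2} - 3)/2 for i ≥ 1. -/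
namespace TribAux
open List

def phi (w : List ℕ) : List ℕ := w.flatMap tribMap

@[simp] lemma phi_nil : phi [] = [] := rfl
@[simp] lemma phi_cons (c : ℕ) (w : List ℕ) : phi (c :: w) = tribMap c ++ phi w := rfl
@[simp] lemma phi_append (u v : List ℕ) : phi (u ++ v) = phi u ++ phi v :=
  List.flatMap_append

lemma tribMap_head (c : ℕ) : ∃ t, tribMap c = 0 :: t := by
  unfold tribMap; split_ifs <;> exact ⟨_, rfl⟩

lemma tribMap_ne_nil (c : ℕ) : tribMap c ≠ [] := by
  obtain ⟨t, ht⟩ := tribMap_head c; simp [ht]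

lemma phi_head (v : List ℕ) (h : v ≠ []) : ∃ t, phi v = 0 :: t := by
  cases v with
  | nil => exact absurd rfl h
  | cons c v' =>
    obtain ⟨t, ht⟩ := tribMap_head c
    exact ⟨t ++ phi v', by simp [ht]⟩

lemma phi_ne_cons (v : List ℕ) {x : ℕ} (hx : x ≠ 0) (t : List ℕ) : phi v ≠ x :: t := by
  cases v with
  | nil => simp
  | cons c v' =>
    obtain ⟨s, hs⟩ := phi_head (c :: v') (by simp)
    rw [hs]; intro h; exact hx (List.cons.injEq .. ▸ h).1.symm

lemma length_phi (w : List ℕ) :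
    (phi w).length = w.length + w.count 0 + w.count 1 := by
  induction w with
  | nil => simp
  | cons c w ih =>
    by_cases h0 : c = 0
    · subst h0; simp [tribMap, List.count_cons, ih]; omega
    · by_cases h1 : c = 1
      · subst h1; simp [tribMap, List.count_cons, ih]; omega
      · simp [tribMap, h0, h1, List.count_cons, ih]; omega

lemma count0_phi (w : List ℕ) : (phi w).count 0 = w.length := by
  induction w with
  | nil => simp
  | cons c w ih =>
    by_cases h0 : c = 0
    · subst h0; simp [tribMap, List.count_cons, ih]
    · by_cases h1 : c = 1
      · subst h1; simp [tribMap, List.count_cons, ih]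
      · simp [tribMap, h0, h1, List.count_cons, ih]

lemma count1_phi (w : List ℕ) : (phi w).count 1 = w.count 0 := by
  induction w with
  | nil => simp
  | cons c w ih =>
    by_cases h0 : c = 0
    · subst h0; simp [tribMap, List.count_cons, ih]
    · by_cases h1 : c = 1
      · subst h1; simp [tribMap, List.count_cons, ih, h0]
      · simp [tribMap, h0, h1, List.count_cons, ih]

lemma block_comm (c : ℕ) : tribMap c ++ [0] = 0 :: (tribMap c).reverse := by
  unfold tribMap; split_ifs <;> rfl

lemma mirror : ∀ w : List ℕ, phi w ++ [0] = 0 :: w.flatMap (fun c => (tribMap c).reverse)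
  | [] => rfl
  | c :: w => by
    rw [phi_cons, List.append_assoc, mirror w, List.flatMap_cons,
      ← List.cons_append, ← block_comm, List.append_assoc]
    rfl

lemma rev_phi (w : List ℕ) : (phi w ++ [0]).reverse = phi w.reverse ++ [0] := by
  rw [mirror w, List.reverse_cons, List.reverse_flatMap]
  congr 1
  simp only [Function.comp_def, List.reverse_reverse, phi]

lemma mem_tribMap_lt {c x : ℕ} (h : x ∈ tribMap c) : x < 3 := by
  unfold tribMap at h; split_ifs at h <;> simp at h <;> omega

lemma mem_tribIter_lt : ∀ k, ∀ c ∈ tribIter k, c < 3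
  | 0 => by intro c hc; simp [tribIter] at hc; omega
  | k+1 => by
    intro c hc
    rw [tribIter] at hc
    obtain ⟨a, _, hc⟩ := List.mem_flatMap.1 hc
    exact mem_tribMap_lt hc

lemma phi_prefix {u v : List ℕ} (h : u <+: v) : phi u <+: phi v := by
  obtain ⟨t, rfl⟩ := h; exact ⟨phi t, (phi_append u t).symm⟩

lemma prefix_step (k : ℕ) : tribIter k <+: tribIter (k+1) := by
  induction k with
  | zero => exact ⟨[1], rfl⟩
  | succ k ih => exact phi_prefix ih

lemma prefix_mono {j m : ℕ} (h : j ≤ m) : tribIter j <+: tribIter m := by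
  induction h with
  | refl => exact List.prefix_refl _
  | step h ih => exact ih.trans (prefix_step _)

lemma zero_mem_tribIter (k : ℕ) : 0 ∈ tribIter k :=
  (prefix_mono (Nat.zero_le k)).subset (by simp [tribIter])

lemma length_tribIter_lt (k : ℕ) : (tribIter k).length < (tribIter (k+1)).length := by
  have h : (tribIter (k+1)).length
      = (tribIter k).length + (tribIter k).count 0 + (tribIter k).count 1 :=
    length_phi (tribIter k)
  have h2 : 0 < (tribIter k).count 0 := List.count_pos_iff.2 (zero_mem_tribIter k)
  omega

lemma length_tribIter_ge (k : ℕ) : k + 1 ≤ (tribIter k).length := by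
  induction k with
  | zero => simp [tribIter]
  | succ k ih => have := length_tribIter_lt k; omega

def preT (n : ℕ) : List ℕ := (tribIter n).take n

lemma preT_length (n : ℕ) : (preT n).length = n := by
  simp [preT]; have := length_tribIter_ge n; omega

lemma preT_prefix (n : ℕ) : preT n <+: tribIter n := List.take_prefix n _

lemma prefix_unique {u : List ℕ} {m : ℕ} (hu : u <+: tribIter m) : u = preT u.length := by
  have h1 : u <+: tribIter (max m u.length) := hu.trans (prefix_mono (le_max_left _ _))
  have h2 : preT u.length <+: tribIter (max m u.length) :=
    (preT_prefix _).trans (prefix_mono (le_max_right _ _))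
  have h3 : u <+: preT u.length :=
    List.prefix_of_prefix_length_le h1 h2 (by rw [preT_length])
  exact h3.eq_of_length (by rw [preT_length])

lemma tribWord_eq {w : List ℕ} {m : ℕ} (hw : w <+: tribIter m) {j : ℕ} (hj : j < w.length) :
    tribWord j = w[j] := by
  set M := max (j+1) m with hM
  have h1 : tribIter (j+1) <+: tribIter M := prefix_mono (le_max_left _ _)
  have h2 : w <+: tribIter M := hw.trans (prefix_mono (le_max_right _ _))
  have hl : j < (tribIter (j+1)).length := by have := length_tribIter_ge (j+1); omega
  have e1 := h1.getElem hl
  have e2 := h2.getElem hj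
  rw [show tribWord j = (tribIter (j+1)).getD j 0 from rfl, List.getD_eq_getElem _ _ hl,
    e1, ← e2]

lemma phi_inj : ∀ u v : List ℕ, (∀ c ∈ u, c < 3) → (∀ c ∈ v, c < 3) → phi u = phi v → u = v := by
  intro u
  induction u with
  | nil =>
    intro v _ _ h
    cases v with
    | nil => rfl
    | cons c v' =>
      obtain ⟨t, ht⟩ := phi_head (c :: v') (by simp)
      rw [ht] at h; simp at h
  | cons a u' ih =>
    intro v hu hv h
    cases v with
    | nil =>
      obtain ⟨t, ht⟩ := phi_head (a :: u') (by simp)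
      rw [ht] at h; simp at h
    | cons b v' =>
      have ha : a < 3 := hu a (by simp)
      have hb : b < 3 := hv b (by simp)
      have hu' : ∀ c ∈ u', c < 3 := fun c hc => hu c (by simp [hc])
      have hv' : ∀ c ∈ v', c < 3 := fun c hc => hv c (by simp [hc])
      simp only [phi_cons] at h
      interval_cases a <;> interval_cases b <;>
        simp only [tribMap, if_true, if_false] at h <;>
        norm_num at h
      · exact congrArg (0 :: ·) (ih v' hu' hv' h)
      · exact absurd h.symm (phi_ne_cons v' one_ne_zero _)
      · exact congrArg (1 :: ·) (ih v' hu' hv' h)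
      · exact absurd h.symm (phi_ne_cons v' two_ne_zero _)
      · exact absurd h (phi_ne_cons u' one_ne_zero _)
      · exact absurd h (phi_ne_cons u' two_ne_zero _)
      · exact congrArg (2 :: ·) (ih v' hu' hv' h)

def palSeq : ℕ → List ℕ
  | 0 => []
  | k+1 => phi (palSeq k) ++ [0]

lemma palSeq_rev (k : ℕ) : (palSeq k).reverse = palSeq k := by
  induction k with
  | zero => rfl
  | succ k ih => rw [palSeq, rev_phi, ih]

lemma palSeq_prefix : ∀ k, ∃ m, palSeq k <+: tribIter m ∧ (palSeq k).length < (tribIter m).length := by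
  intro k
  induction k with
  | zero => exact ⟨0, List.nil_prefix, by simp [palSeq, tribIter]⟩
  | succ k ih =>
    obtain ⟨m, ⟨t, ht⟩, hlt⟩ := ih
    have htne : t ≠ [] := by
      intro h; subst h; simp at ht; rw [ht] at hlt; omega
    obtain ⟨c, t', rfl⟩ : ∃ c t', t = c :: t' := by
      cases t with
      | nil => exact absurd rfl htne
      | cons c t' => exact ⟨c, t', rfl⟩
    obtain ⟨s, hs⟩ := tribMap_head c
    have hiter : tribIter (m+1) = phi (palSeq k) ++ (0 :: (s ++ phi t')) := by
      show phi (tribIter m) = _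
      rw [← ht, phi_append, phi_cons, hs]
      simp
    have hpre : palSeq (k+1) <+: tribIter (m+1) := by
      rw [palSeq, hiter]
      exact ⟨s ++ phi t', by simp⟩
    refine ⟨m+1+1, hpre.trans (prefix_step (m+1)), ?_⟩
    have h1 : (palSeq (k+1)).length ≤ (tribIter (m+1)).length := hpre.length_le
    have h2 := length_tribIter_lt (m+1)
    omega

lemma palSeq_eq_preT (k : ℕ) : palSeq k = preT (palSeq k).length := by
  obtain ⟨m, hm, _⟩ := palSeq_prefix k
  exact prefix_unique hm

lemma trib_add3 (n : ℕ) : trib (n+3) = trib (n+2) + trib (n+1) + trib n := rfl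

/-- Key arithmetic: lengths and 0-counts of the palindromic prefixes. -/
lemma palSeq_stats : ∀ k, 2 * (palSeq k).length + 3 = trib (k+1) + trib (k+3)
    ∧ 2 * (palSeq k).count 0 + 1 = trib k + trib (k+2) := by
  have key : ∀ k, (2 * (palSeq k).length + 3 = trib (k+1) + trib (k+3)
      ∧ 2 * (palSeq k).count 0 + 1 = trib k + trib (k+2))
      ∧ (2 * (palSeq (k+1)).length + 3 = trib (k+2) + trib (k+4)
      ∧ 2 * (palSeq (k+1)).count 0 + 1 = trib (k+1) + trib (k+3)) := by
    intro k
    induction k with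
    | zero => refine ⟨⟨rfl, rfl⟩, ?_, ?_⟩ <;> rfl
    | succ k ih =>
      obtain ⟨⟨hL0, hC0⟩, hL1, hC1⟩ := ih
      refine ⟨⟨hL1, hC1⟩, ?_, ?_⟩
      · show 2 * (palSeq (k+2)).length + 3 = trib (k+3) + trib (k+5)
        have e1 : (palSeq (k+2)).length = (palSeq (k+1)).length
            + (palSeq (k+1)).count 0 + (palSeq (k+1)).count 1 + 1 := by
          rw [show palSeq (k+2) = phi (palSeq (k+1)) ++ [0] from rfl]
          simp [length_phi]
        have e2 : (palSeq (k+1)).count 1 = (palSeq k).count 0 := by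
          rw [show palSeq (k+1) = phi (palSeq k) ++ [0] from rfl]
          simp [count1_phi]
        have e3 : (palSeq (k+1)).count 0 = (palSeq k).length + 1 := by
          rw [show palSeq (k+1) = phi (palSeq k) ++ [0] from rfl]
          simp [count0_phi]
        have r0 : trib (k+3) = trib (k+2) + trib (k+1) + trib k := trib_add3 k
        have r1 : trib (k+4) = trib (k+3) + trib (k+2) + trib (k+1) := trib_add3 (k+1)
        have r2 : trib (k+5) = trib (k+4) + trib (k+3) + trib (k+2) := trib_add3 (k+2)
        omega
      · show 2 * (palSeq (k+2)).count 0 + 1 = trib (k+2) + trib (k+4)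
        have e3 : (palSeq (k+2)).count 0 = (palSeq (k+1)).length + 1 := by
          rw [show palSeq (k+2) = phi (palSeq (k+1)) ++ [0] from rfl]
          simp [count0_phi]
        omega
  exact fun k => (key k).1

/-- decomposition of prefixes of `phi W` -/
lemma decomp : ∀ (W : List ℕ) (n : ℕ), ∃ w, w <+: W ∧
    ((phi W).take n = phi w ∨ (phi W).take n = phi w ++ [0]) := by
  intro W
  induction W with
  | nil => intro n; exact ⟨[], List.prefix_refl _, Or.inl (by simp)⟩
  | cons c W' ih =>
    intro n
    match n with
    | 0 => exact ⟨[], by simp⟩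
    | 1 =>
      refine ⟨[], by simp, Or.inr ?_⟩
      obtain ⟨t, ht⟩ := tribMap_head c
      simp [ht]
    | (m+2) =>
      by_cases h0 : c = 0
      · subst h0
        obtain ⟨w, hw, hor⟩ := ih m
        refine ⟨0 :: w, (List.cons_prefix_cons).2 ⟨rfl, hw⟩, ?_⟩
        rcases hor with h | h <;> [left; right] <;>
          simp [tribMap, List.take_succ_cons, h]
      · by_cases h1 : c = 1
        · subst h1
          obtain ⟨w, hw, hor⟩ := ih m
          refine ⟨1 :: w, (List.cons_prefix_cons).2 ⟨rfl, hw⟩, ?_⟩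
          rcases hor with h | h <;> [left; right] <;>
            simp [tribMap, List.take_succ_cons, h]
        · obtain ⟨w, hw, hor⟩ := ih (m+1)
          refine ⟨c :: w, (List.cons_prefix_cons).2 ⟨rfl, hw⟩, ?_⟩
          rcases hor with h | h <;> [left; right] <;>
            simp [tribMap, h0, h1, List.take_succ_cons, h]

lemma P_iff_list (n : ℕ) :
    (∀ j < n, tribWord j = tribWord (n - 1 - j)) ↔ (preT n).reverse = preT n := by
  constructor
  · intro h
    apply List.ext_getElem (by simp)
    intro j h1 h2
    have hj : j < n := by simpa [preT_length] using h2
    have hj' : n - 1 - j < n := by omega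
    rw [List.getElem_reverse]
    rw [← tribWord_eq (preT_prefix n) (by rw [preT_length]; omega),
      ← tribWord_eq (preT_prefix n) (by rw [preT_length]; exact hj)]
    rw [preT_length]
    exact (h j hj).symm
  · intro h j hj
    have hj' : n - 1 - j < n := by omega
    rw [tribWord_eq (preT_prefix n) (by rw [preT_length]; exact hj),
      tribWord_eq (preT_prefix n) (by rw [preT_length]; exact hj')]
    have h2 := List.getElem_reverse (l := preT n) (i := j)
      (by rw [List.length_reverse, preT_length]; exact hj)
    simp only [h, preT_length] at h2
    exact h2

lemma fwd : ∀ n, (preT n).reverse = preT n → ∃ k, n = (palSeq k).length := by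
  intro n
  induction n using Nat.strong_induction_on with
  | _ n IH =>
  intro hpal
  match n, hpal, IH with
  | 0, _, _ => exact ⟨0, rfl⟩
  | (n'+1), hpal, IH =>
  obtain ⟨w, hw, hor⟩ := decomp (tribIter n') (n'+1)
  have hpre : preT (n'+1) = (phi (tribIter n')).take (n'+1) := rfl
  have hlen : (preT (n'+1)).length = n'+1 := preT_length _
  have main : ∃ w₂, w₂ <+: tribIter n' ∧ preT (n'+1) = phi w₂ ++ [0] := by
    rcases hor with h | h
    · -- last letter analysis
      have hu : preT (n'+1) = phi w := hpre.trans h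
      have hne : preT (n'+1) ≠ [] := by intro hx; rw [hx] at hlen; simp at hlen
      have hhead : (preT (n'+1))[0]'(by omega) = 0 := by
        rw [← tribWord_eq (preT_prefix _) (by omega)]
        rfl
      have hlast : (preT (n'+1))[n']'(by omega) = 0 := by
        have hrev := List.getElem_reverse (l := preT (n'+1)) (i := 0)
          (by rw [List.length_reverse, hlen]; omega)
        simp only [hpal, hlen, Nat.add_sub_cancel, Nat.sub_zero] at hrev
        exact hrev.symm.trans hhead
      rcases List.eq_nil_or_concat w with rfl | ⟨w', c, rfl⟩
      · rw [hu] at hlen; simp at hlen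
      · rw [List.concat_eq_append] at hu hw
        have hphi : phi (w' ++ [c]) = phi w' ++ tribMap c := by simp
        have hu' : preT (n'+1) = phi w' ++ tribMap c := hu.trans hphi
        have hlast2 : (preT (n'+1)).getLast hne = 0 := by
          rw [List.getLast_eq_getElem]
          simpa [hlen] using hlast
        simp only [hu'] at hlast2
        have hlast3 : (tribMap c).getLast (tribMap_ne_nil c) = 0 :=
          (List.getLast_append_of_ne_nil (by simp [tribMap_ne_nil c]) (tribMap_ne_nil c)).symm.trans hlast2
        have hc : tribMap c = [0] := by
          unfold tribMap
          unfold tribMap at hlast3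
          split_ifs at hlast3 with h1 h2 <;> simp_all
        refine ⟨w', ?_, ?_⟩
        · exact List.IsPrefix.trans ⟨[c], rfl⟩ hw
        · rw [hu', hc]
    · exact ⟨w, hw, hpre.trans h⟩
  obtain ⟨w₂, hw₂, heq⟩ := main
  have hlet : ∀ c ∈ w₂, c < 3 := fun c hc => mem_tribIter_lt n' c (hw₂.subset hc)
  have hlet' : ∀ c ∈ w₂.reverse, c < 3 := fun c hc => hlet c (List.mem_reverse.1 hc)
  have hlen2 : n' + 1 = (phi w₂).length + 1 := by
    rw [← hlen, heq]; simp
  have hwlt : w₂.length < n' + 1 := by have := length_phi w₂; omega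
  have hp2 : phi w₂.reverse ++ [0] = phi w₂ ++ [0] := by
    rw [← rev_phi, ← heq, hpal, heq]
  have hp3 : phi w₂.reverse = phi w₂ := List.append_cancel_right hp2
  have hrev : w₂.reverse = w₂ := phi_inj _ _ hlet' hlet hp3
  have hpre2 : w₂ = preT w₂.length := prefix_unique hw₂
  obtain ⟨k, hk⟩ := IH w₂.length hwlt (by rw [← hpre2]; exact hrev)
  have hw₂eq : w₂ = palSeq k := by
    rw [hpre2, hk, ← palSeq_eq_preT]
  refine ⟨k+1, ?_⟩
  have : (palSeq (k+1)).length = (phi (palSeq k)).length + 1 := by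
    rw [show palSeq (k+1) = phi (palSeq k) ++ [0] from rfl]; simp
  rw [this, ← hw₂eq, ← hlen2]

end TribAux

/-- The palindromic prefixes of the Tribonacci word are exactly those of length 0 or
`(T_i + T_{i+2} - 3)/2` for `i ≥ 1`. -/
theorem tribWord_palindromic_prefixes (n : ℕ) :
    (∀ j < n, tribWord j = tribWord (n - 1 - j)) ↔
      n = 0 ∨ ∃ i ≥ 1, 2 * n + 3 = trib i + trib (i + 2) := by
  rw [TribAux.P_iff_list]
  constructor
  · intro h
    obtain ⟨k, rfl⟩ := TribAux.fwd n h
    exact Or.inr ⟨k+1, Nat.le_add_left 1 k, (TribAux.palSeq_stats k).1⟩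
  · rintro (rfl | ⟨i, hi1, hi2⟩)
    · simp [TribAux.preT]
    · obtain ⟨j, rfl⟩ : ∃ j, i = j + 1 := ⟨i - 1, by omega⟩
      have h1 : 2 * n + 3 = trib (j+1) + trib (j+3) := hi2
      have h2 := (TribAux.palSeq_stats j).1
      have hn : n = (TribAux.palSeq j).length := by omega
      subst hn
      rw [← TribAux.palSeq_eq_preT]
      exact TribAux.palSeq_rev j
end
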